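/- Let f_1, f_2, ... be a family of queries on datasets that is 1-sensitive and has unidirectional sensitivity, and let D, D' be neighboring datasets. Let γ, ν_1, ν_2, ... be independent Lap(2/ε) random variables and T̂ := T + γ. Then for every integer k ≥ 1, P( max_{i<k}(f_i(D) + ν_i) < T̂ and f_k(D) + ν_k ≥ T̂ ) ≤ e^ε · P( max_{i<k}(f_i(D') + ν_i) < T̂ and f_k(D') + ν_k ≥ T̂ ) (where the max over the empty set is interpreted as −∞). Equivalently, the output stream of UDSAboveThreshold is ε-differentially private. -/

import Mathlib

open MeasureTheory Real
open scoped ENNReal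

/-- The Laplace distribution on ℝ with location 0 and scale `b`. -/
noncomputable def laplace (b : ℝ) : Measure ℝ :=
  volume.withDensity fun x => ENNReal.ofReal ((2 * b)⁻¹ * Real.exp (-|x| / b))

instance (b : ℝ) : SigmaFinite (laplace b) := by
  unfold laplace; infer_instance

lemma laplace_density_shift {b : ℝ} (hb : 0 < b) (t x : ℝ) :
    ENNReal.ofReal ((2 * b)⁻¹ * Real.exp (-|x - t| / b)) ≤
      ENNReal.ofReal (Real.exp (|t| / b)) *
        ENNReal.ofReal ((2 * b)⁻¹ * Real.exp (-|x| / b)) := by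
  rw [← ENNReal.ofReal_mul (Real.exp_nonneg _)]
  apply ENNReal.ofReal_le_ofReal
  have h1 : -|x - t| ≤ |t| + -|x| := by
    have := abs_sub_abs_le_abs_sub x t
    have h2 : |x - t| = |x - t| := rfl
    have : |x| - |x - t| ≤ |t| := by
      have := abs_sub_abs_le_abs_sub x (x - t)
      simpa using this
    linarith
  have h2 : -|x - t| / b ≤ |t| / b + -|x| / b := by
    rw [← add_div]
    exact (div_le_div_iff_of_pos_right hb).mpr h1
  calc (2 * b)⁻¹ * Real.exp (-|x - t| / b)
      ≤ (2 * b)⁻¹ * Real.exp (|t| / b + -|x| / b) := by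
        exact mul_le_mul_of_nonneg_left (Real.exp_le_exp.2 h2) (by positivity)
    _ = Real.exp (|t| / b) * ((2 * b)⁻¹ * Real.exp (-|x| / b)) := by
        rw [Real.exp_add]; ring

lemma lap_lintegral_shift {b : ℝ} (hb : 0 < b) (t : ℝ) (h : ℝ → ℝ≥0∞) :
    ∫⁻ x, h (x + t) ∂laplace b ≤
      ENNReal.ofReal (Real.exp (|t| / b)) * ∫⁻ x, h x ∂laplace b := by
  have hd : Measurable fun x : ℝ => ENNReal.ofReal ((2 * b)⁻¹ * Real.exp (-|x| / b)) := by
    fun_prop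
  unfold laplace
  rw [lintegral_withDensity_eq_lintegral_mul_non_measurable _ hd
      (ae_of_all _ fun x => ENNReal.ofReal_lt_top),
    lintegral_withDensity_eq_lintegral_mul_non_measurable _ hd
      (ae_of_all _ fun x => ENNReal.ofReal_lt_top)]
  have key : (∫⁻ x, ((fun x => ENNReal.ofReal ((2 * b)⁻¹ * Real.exp (-|x| / b))) *
      fun x => h (x + t)) x) =
      ∫⁻ x, ENNReal.ofReal ((2 * b)⁻¹ * Real.exp (-|x - t| / b)) * h x := by
    rw [← lintegral_add_right_eq_self
      (fun x => ENNReal.ofReal ((2 * b)⁻¹ * Real.exp (-|x - t| / b)) * h x) t]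
    congr 1; funext x
    simp [add_sub_cancel_right]
  rw [key]
  calc ∫⁻ x, ENNReal.ofReal ((2 * b)⁻¹ * Real.exp (-|x - t| / b)) * h x
      ≤ ∫⁻ x, ENNReal.ofReal (Real.exp (|t| / b)) *
          (ENNReal.ofReal ((2 * b)⁻¹ * Real.exp (-|x| / b)) * h x) := by
        apply lintegral_mono
        intro x
        dsimp only
        rw [← mul_assoc]
        exact mul_le_mul_left (laplace_density_shift hb t x) _
    _ = ENNReal.ofReal (Real.exp (|t| / b)) *
        ∫⁻ x, ENNReal.ofReal ((2 * b)⁻¹ * Real.exp (-|x| / b)) * h x :=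
        lintegral_const_mul' _ _ ENNReal.ofReal_ne_top
    _ = ENNReal.ofReal (Real.exp (|t| / b)) *
        ∫⁻ x, ((fun x => ENNReal.ofReal ((2 * b)⁻¹ * Real.exp (-|x| / b))) * h) x := rfl

lemma update_shift_measurable {k : ℕ} (j : Fin k) (t : ℝ) :
    Measurable fun ν : Fin k → ℝ => Function.update ν j (ν j + t) := by
  apply measurable_pi_iff.2
  intro i
  simp only [Function.update_apply]
  by_cases h : i = j
  · simp only [if_pos h]
    exact show Measurable fun ν : Fin k → ℝ => ν j + t by fun_prop
  · simp only [if_neg h]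
    exact measurable_pi_apply i

lemma pi_lap_shift {b : ℝ} (hb : 0 < b) {k : ℕ} (j : Fin k) (t : ℝ)
    (B : Set (Fin k → ℝ)) (hB : MeasurableSet B) :
    Measure.pi (fun _ : Fin k => laplace b)
        ((fun ν => Function.update ν j (ν j + t)) ⁻¹' B) ≤
      ENNReal.ofReal (Real.exp (|t| / b)) * Measure.pi (fun _ : Fin k => laplace b) B := by
  classical
  have hψ := update_shift_measurable j t
  have hpre : MeasurableSet ((fun ν : Fin k → ℝ => Function.update ν j (ν j + t)) ⁻¹' B) :=
    hψ hB
  rw [← lintegral_indicator_one hB, ← lintegral_indicator_one hpre]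
  have h1 : ∀ ν : Fin k → ℝ,
      ((fun ν : Fin k → ℝ => Function.update ν j (ν j + t)) ⁻¹' B).indicator
        (1 : (Fin k → ℝ) → ℝ≥0∞) ν = B.indicator 1 (Function.update ν j (ν j + t)) := by
    intro ν
    simp [Set.indicator_apply, Set.mem_preimage]
  simp_rw [h1]
  rw [← lintegral_const_mul' _ _ ENNReal.ofReal_ne_top]
  apply lintegral_le_of_lmarginal_le {j}
    ((measurable_one.indicator hB).comp hψ)
    (measurable_const.mul (measurable_one.indicator hB))
  rw [lmarginal_singleton, lmarginal_singleton]
  refine Pi.le_def.mpr fun x => ?_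
  have h2 : ∀ y : ℝ, Function.update (Function.update x j y) j
      ((Function.update x j y) j + t) = Function.update x j (y + t) := by
    intro y
    rw [Function.update_self, Function.update_idem]
  simp only [Function.comp_apply, Function.update_self, Function.update_idem, Pi.mul_apply]
  rw [lintegral_const_mul' _ _ ENNReal.ofReal_ne_top]
  exact lap_lintegral_shift hb t (fun y => B.indicator 1 (Function.update x j y))

lemma key_lemma {b : ℝ} (hb : 0 < b) {k : ℕ} (j : Fin k)
    (A A' : Set (ℝ × (Fin k → ℝ))) (hA' : MeasurableSet A') (s t : ℝ)
    (hincl : ∀ γ ν, (γ, ν) ∈ A → (γ + s, Function.update ν j (ν j + t)) ∈ A') :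
    (laplace b).prod (Measure.pi fun _ : Fin k => laplace b) A ≤
      ENNReal.ofReal (Real.exp (|s| / b)) * (ENNReal.ofReal (Real.exp (|t| / b)) *
        (laplace b).prod (Measure.pi fun _ : Fin k => laplace b) A') := by
  classical
  set μ := laplace b
  set mpp := Measure.pi fun _ : Fin k => laplace b with hmpp
  set φ : ℝ × (Fin k → ℝ) → ℝ × (Fin k → ℝ) :=
    fun p => (p.1 + s, Function.update p.2 j (p.2 j + t)) with hφ
  have hφm : Measurable φ :=
    (measurable_fst.add_const s).prodMk ((update_shift_measurable j t).comp measurable_snd)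
  have hsub : A ⊆ φ ⁻¹' A' := fun p hp => hincl p.1 p.2 hp
  have hsliceM : ∀ u : ℝ, MeasurableSet (Prod.mk u ⁻¹' A') := fun u =>
    measurable_prodMk_left hA'
  calc μ.prod mpp A ≤ μ.prod mpp (φ ⁻¹' A') := measure_mono hsub
    _ = ∫⁻ γ, mpp (Prod.mk γ ⁻¹' (φ ⁻¹' A')) ∂μ := Measure.prod_apply (hφm hA')
    _ ≤ ∫⁻ γ, ENNReal.ofReal (Real.exp (|t| / b)) * mpp (Prod.mk (γ + s) ⁻¹' A') ∂μ := by
        apply lintegral_mono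
        intro γ
        dsimp only
        have : Prod.mk γ ⁻¹' (φ ⁻¹' A') =
            (fun ν : Fin k → ℝ => Function.update ν j (ν j + t)) ⁻¹'
              (Prod.mk (γ + s) ⁻¹' A') := rfl
        rw [this]
        exact pi_lap_shift hb j t _ (hsliceM (γ + s))
    _ = ENNReal.ofReal (Real.exp (|t| / b)) * ∫⁻ γ, mpp (Prod.mk (γ + s) ⁻¹' A') ∂μ :=
        lintegral_const_mul' _ _ ENNReal.ofReal_ne_top
    _ ≤ ENNReal.ofReal (Real.exp (|t| / b)) *
        (ENNReal.ofReal (Real.exp (|s| / b)) * ∫⁻ γ, mpp (Prod.mk γ ⁻¹' A') ∂μ) :=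
        mul_le_mul_right (lap_lintegral_shift hb s fun γ => mpp (Prod.mk γ ⁻¹' A')) _
    _ = ENNReal.ofReal (Real.exp (|s| / b)) *
        (ENNReal.ofReal (Real.exp (|t| / b)) * ∫⁻ γ, mpp (Prod.mk γ ⁻¹' A') ∂μ) := by ring
    _ = ENNReal.ofReal (Real.exp (|s| / b)) * (ENNReal.ofReal (Real.exp (|t| / b)) *
        μ.prod mpp A') := by rw [Measure.prod_apply hA']

/-- UDSAboveThreshold is ε-DP: with `γ, ν_1, …, ν_k` independent `Lap(2/ε)` noise and
`T̂ = T + γ`, for 1-sensitive queries with unidirectional sensitivity and any `k ≥ 1`,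
`P(max_{i<k}(f_i(D) + ν_i) < T̂ ∧ f_k(D) + ν_k ≥ T̂)
  ≤ e^ε · P(max_{i<k}(f_i(D') + ν_i) < T̂ ∧ f_k(D') + ν_k ≥ T̂)`,
i.e. the probability of the output stream `⊥^{k−1}⊤`.  Here the first coordinate of the
sample is `γ` and the `i`-th coordinate (zero-indexed `i : Fin k`) of the second is
`ν_{i+1}`; the max over an empty index set is `−∞`, i.e. the condition is vacuous. -/
theorem stmt_8 {Dset : Type*} (Neighbor : Dset → Dset → Prop)
    (f : ℕ → Dset → ℝ)
    -- 1-sensitivity: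
    (hsens : ∀ d d', Neighbor d d' → ∀ i, |f i d - f i d'| ≤ 1)
    -- unidirectional sensitivity:
    (huds : ∀ d d', Neighbor d d' → (∃ i, f i d > f i d') → ¬∃ j, f j d < f j d')
    (D D' : Dset) (hN : Neighbor D D')
    (T ε : ℝ) (hε : 0 < ε) (k : ℕ) (hk : 1 ≤ k) :
    (laplace (2 / ε)).prod (Measure.pi fun _ : Fin k => laplace (2 / ε))
        {p : ℝ × (Fin k → ℝ) |
          (∀ i : Fin k, (i : ℕ) + 1 < k → f ((i : ℕ) + 1) D + p.2 i < T + p.1) ∧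
          T + p.1 ≤ f k D + p.2 ⟨k - 1, by omega⟩} ≤
      ENNReal.ofReal (Real.exp ε) *
        (laplace (2 / ε)).prod (Measure.pi fun _ : Fin k => laplace (2 / ε))
          {p : ℝ × (Fin k → ℝ) |
            (∀ i : Fin k, (i : ℕ) + 1 < k → f ((i : ℕ) + 1) D' + p.2 i < T + p.1) ∧
            T + p.1 ≤ f k D' + p.2 ⟨k - 1, by omega⟩} := by
  classical
  have hb : (0 : ℝ) < 2 / ε := by positivity
  have hj : (0 : ℕ) < k := hk
  set j : Fin k := ⟨k - 1, by omega⟩ with hjdef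
  have hmeasSet : ∀ d : Dset, MeasurableSet {p : ℝ × (Fin k → ℝ) |
      (∀ i : Fin k, (i : ℕ) + 1 < k → f ((i : ℕ) + 1) d + p.2 i < T + p.1) ∧
      T + p.1 ≤ f k d + p.2 ⟨k - 1, by omega⟩} := by
    intro d
    have h1 : MeasurableSet {p : ℝ × (Fin k → ℝ) |
        ∀ i : Fin k, (i : ℕ) + 1 < k → f ((i : ℕ) + 1) d + p.2 i < T + p.1} := by
      rw [Set.setOf_forall]
      refine MeasurableSet.iInter fun i => ?_
      by_cases hik : (i : ℕ) + 1 < k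
      · simp only [hik, forall_true_left]
        exact measurableSet_lt (by fun_prop) (by fun_prop)
      · simp [hik]
    have h2 : MeasurableSet {p : ℝ × (Fin k → ℝ) |
        T + p.1 ≤ f k d + p.2 (⟨k - 1, by omega⟩ : Fin k)} :=
      measurableSet_le (by fun_prop) (by fun_prop)
    exact h1.inter h2
  have main : ∀ s t : ℝ, |s| + |t| ≤ 2 →
      (∀ γ (ν : Fin k → ℝ),
        (γ, ν) ∈ {p : ℝ × (Fin k → ℝ) |
          (∀ i : Fin k, (i : ℕ) + 1 < k → f ((i : ℕ) + 1) D + p.2 i < T + p.1) ∧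
          T + p.1 ≤ f k D + p.2 ⟨k - 1, by omega⟩} →
        (γ + s, Function.update ν j (ν j + t)) ∈ {p : ℝ × (Fin k → ℝ) |
          (∀ i : Fin k, (i : ℕ) + 1 < k → f ((i : ℕ) + 1) D' + p.2 i < T + p.1) ∧
          T + p.1 ≤ f k D' + p.2 ⟨k - 1, by omega⟩}) →
      (laplace (2 / ε)).prod (Measure.pi fun _ : Fin k => laplace (2 / ε))
        {p : ℝ × (Fin k → ℝ) |
          (∀ i : Fin k, (i : ℕ) + 1 < k → f ((i : ℕ) + 1) D + p.2 i < T + p.1) ∧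
          T + p.1 ≤ f k D + p.2 ⟨k - 1, by omega⟩} ≤
      ENNReal.ofReal (Real.exp ε) *
        (laplace (2 / ε)).prod (Measure.pi fun _ : Fin k => laplace (2 / ε))
          {p : ℝ × (Fin k → ℝ) |
            (∀ i : Fin k, (i : ℕ) + 1 < k → f ((i : ℕ) + 1) D' + p.2 i < T + p.1) ∧
            T + p.1 ≤ f k D' + p.2 ⟨k - 1, by omega⟩} := by
    intro s t hst hincl
    refine le_trans (key_lemma hb j _ _ (hmeasSet D') s t hincl) ?_
    rw [← mul_assoc, ← ENNReal.ofReal_mul (Real.exp_nonneg _), ← Real.exp_add]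
    apply mul_le_mul_left
    apply ENNReal.ofReal_le_ofReal
    apply Real.exp_le_exp.2
    rw [← add_div, div_le_iff₀ hb]
    have h2 : ε * (2 / ε) = 2 := by field_simp
    rw [h2]; exact hst
  rcases Classical.em (∃ i, f i D > f i D') with hcase | hcase
  · -- all queries on D' dominated by D; shift only the last noise
    have hord : ∀ i, f i D' ≤ f i D := by
      have h := huds D D' hN hcase
      intro i
      by_contra hcon
      exact h ⟨i, by linarith [not_le.1 hcon]⟩
    refine main 0 (f k D - f k D') ?_ ?_
    · rw [abs_zero]
      have h := hsens D D' hN k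
      linarith
    · rintro γ ν ⟨h1, h2⟩
      dsimp only at h1 h2
      simp only [Set.mem_setOf_eq]
      refine ⟨?_, ?_⟩
      · intro i hik
        have hij : i ≠ j := by
          refine Fin.ne_of_val_ne ?_
          simp only [hjdef]
          omega
        rw [Function.update_of_ne hij]
        have ho := hord ((i : ℕ) + 1)
        have hlt := h1 i hik
        linarith
      · have hjj : (⟨k - 1, by omega⟩ : Fin k) = j := rfl
        rw [hjj, Function.update_self]
        linarith
  · have hord : ∀ i, f i D ≤ f i D' := fun i => le_of_not_gt fun h => hcase ⟨i, h⟩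
    refine main 1 1 (by norm_num) ?_
    rintro γ ν ⟨h1, h2⟩
    dsimp only at h1 h2
    simp only [Set.mem_setOf_eq]
    refine ⟨?_, ?_⟩
    · intro i hik
      have hij : i ≠ j := by
        refine Fin.ne_of_val_ne ?_
        simp only [hjdef]
        omega
      rw [Function.update_of_ne hij]
      have hs := abs_le.1 (hsens D D' hN ((i : ℕ) + 1))
      have hlt := h1 i hik
      linarith [hs.1]
    · have hjj : (⟨k - 1, by omega⟩ : Fin k) = j := rfl
      rw [hjj, Function.update_self]
      linarith [hord k]
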